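/- Let K ⊂ ℝⁿ be a convex body and μ ∈ Λ such that the μ-surface area measure S_{μ,K} is isotropic. Then (μ(∂K)/(2n))·B₂ⁿ ⊆ Π_μK ⊆ (μ(∂K)/(2√n))·B₂ⁿ. -/

import Mathlib

open MeasureTheory Set Filter Pointwise
open scoped ENNReal InnerProductSpace NNReal Topology

noncomputable section

/-- `n`-dimensional Euclidean space. -/
abbrev Euc (n : ℕ) := EuclideanSpace ℝ (Fin n)

/-- `nK` is (`H^{n-1}`-almost everywhere on `∂K`) an outer unit normal field of `K`. -/
def IsAEOuterNormal {n : ℕ} (K : Set (Euc n)) (nK : Euc n → Euc n) : Prop :=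
  ∀ᵐ y ∂((μH[(n : ℝ) - 1] : Measure (Euc n)).restrict (frontier K)),
    ‖nK y‖ = 1 ∧ ∀ x ∈ K, ⟪x, nK y⟫_ℝ ≤ ⟪y, nK y⟫_ℝ

/-- The measure-dependent projection body `Π_μK`, realized as the convex body whose support
function is `h_{Π_μK}(θ) = (1/2)∫_{∂K}|⟨θ, n_K(y)⟩| φ(y) dH^{n-1}(y)`:
`Π_μK = {x : ∀ θ, ⟨x,θ⟩ ≤ h_{Π_μK}(θ)}`. -/
noncomputable def muProjBody {n : ℕ} (K : Set (Euc n)) (φ : Euc n → ℝ)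
    (nK : Euc n → Euc n) : Set (Euc n) :=
  {x | ∀ θ : Euc n, ⟪x, θ⟫_ℝ ≤
    (1 / 2) * ∫ y in frontier K, |⟪θ, nK y⟫_ℝ| * φ y ∂(μH[(n : ℝ) - 1])}

/-- if the `μ`-surface area measure `S_{μ,K}` (the pushforward under the
Gauss map of the `φ`-weighted boundary measure) is isotropic, then
`(μ(∂K)/(2n)) B₂ⁿ ⊆ Π_μK ⊆ (μ(∂K)/(2√n)) B₂ⁿ`. -/
theorem statement19 (n : ℕ) (hn : 1 ≤ n) (K : Set (Euc n))
    (hKconv : Convex ℝ K) (hKcomp : IsCompact K) (hKint : (interior K).Nonempty)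
    (φ : Euc n → ℝ) (hφmeas : Measurable φ) (hφ0 : ∀ x, 0 ≤ φ x)
    (hφloc : LocallyIntegrable φ volume)
    (μ : Measure (Euc n)) (hμ : μ = volume.withDensity fun x => ENNReal.ofReal (φ x))
    (nK : Euc n → Euc n) (hnK : IsAEOuterNormal K nK)
    (hnKm : AEMeasurable nK ((μH[(n : ℝ) - 1] : Measure (Euc n)).restrict (frontier K)))
    (hφint : IntegrableOn φ (frontier K) μH[(n : ℝ) - 1])
    (S : Measure (Euc n))
    (hS : S = Measure.map nK
      ((((μH[(n : ℝ) - 1] : Measure (Euc n)).restrict (frontier K)).withDensity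
        fun x => ENNReal.ofReal (φ x))))
    (hiso : ∀ θ : Euc n, ‖θ‖ = 1 →
      ∫⁻ u, ENNReal.ofReal (⟪θ, u⟫_ℝ ^ 2) ∂S = S Set.univ / n) :
    ((∫ y in frontier K, φ y ∂(μH[(n : ℝ) - 1])) / (2 * n)) •
        Metric.closedBall (0 : Euc n) 1 ⊆ muProjBody K φ nK ∧
      muProjBody K φ nK ⊆
        ((∫ y in frontier K, φ y ∂(μH[(n : ℝ) - 1])) / (2 * Real.sqrt n)) •
          Metric.closedBall (0 : Euc n) 1 := by
  classical
  have hnpos : (0:ℝ) < n := by exact_mod_cast hn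
  have hsq : (0:ℝ) < Real.sqrt n := Real.sqrt_pos.mpr hnpos
  set ν := ((μH[(n : ℝ) - 1] : Measure (Euc n)).restrict (frontier K)) with hνdef
  set ν' := ν.withDensity (fun x => ENNReal.ofReal (φ x)) with hν'def
  set I := ∫ y in frontier K, φ y ∂(μH[(n : ℝ) - 1]) with hIdef
  have hI0 : 0 ≤ I := integral_nonneg fun x => hφ0 x
  have hnK' : AEMeasurable nK ν' := hnKm.mono_ac (withDensity_absolutelyContinuous _ _)
  have hSdef : S = Measure.map nK ν' := hS
  -- a.e. on S, norms are 1
  have haeν' : ∀ᵐ y ∂ν', ‖nK y‖ = 1 :=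
    (withDensity_absolutelyContinuous ν _).ae_le (hnK.mono fun y hy => hy.1)
  have haeS : ∀ᵐ u ∂S, ‖u‖ = 1 := by
    rw [hSdef]
    exact (ae_map_iff hnK'
      (show MeasurableSet {u : Euc n | ‖u‖ = 1} from
        measurable_norm (measurableSet_singleton (1:ℝ)))).mpr haeν'
  -- total mass
  have hSuniv : S Set.univ = ENNReal.ofReal I := by
    rw [hSdef, Measure.map_apply_of_aemeasurable hnK' MeasurableSet.univ,
      Set.preimage_univ, hν'def, withDensity_apply _ MeasurableSet.univ,
      Measure.restrict_univ, ← ofReal_integral_eq_lintegral_ofReal hφint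
        (ae_of_all _ fun x => hφ0 x)]
  haveI : IsFiniteMeasure S := ⟨by rw [hSuniv]; exact ENNReal.ofReal_lt_top⟩
  have hSunivReal : (S Set.univ).toReal = I := by
    rw [hSuniv, ENNReal.toReal_ofReal hI0]
  -- conversion of the boundary integral to an integral over S
  have hconv : ∀ θ : Euc n,
      (∫ y in frontier K, |⟪θ, nK y⟫_ℝ| * φ y ∂(μH[(n : ℝ) - 1]))
        = ∫ u, |⟪θ, u⟫_ℝ| ∂S := by
    intro θ
    have hcont : Continuous fun u : Euc n => |⟪θ, u⟫_ℝ| :=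
      (continuous_const.inner continuous_id).abs
    rw [hSdef, integral_map hnK' hcont.aestronglyMeasurable]
    have hdens : (fun x => ENNReal.ofReal (φ x)) =
        fun x => ((Real.toNNReal (φ x) : ℝ≥0) : ℝ≥0∞) := rfl
    rw [hν'def, hdens,
      integral_withDensity_eq_integral_smul
        (show Measurable fun x => (φ x).toNNReal from measurable_real_toNNReal.comp hφmeas)]
    refine integral_congr_ae (ae_of_all _ fun x => ?_)
    simp only [NNReal.smul_def, Real.coe_toNNReal _ (hφ0 x), smul_eq_mul]
    ring
  -- integrability
  have hasm1 : ∀ θ : Euc n, AEStronglyMeasurable (fun u : Euc n => |⟪θ, u⟫_ℝ|) S :=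
    fun θ => ((continuous_const.inner continuous_id).abs).aestronglyMeasurable
  have hasm2 : ∀ θ : Euc n, AEStronglyMeasurable (fun u : Euc n => ⟪θ, u⟫_ℝ ^ 2) S :=
    fun θ => (((continuous_const.inner continuous_id)).pow 2).aestronglyMeasurable
  have hbound : ∀ (θ : Euc n), ‖θ‖ = 1 → ∀ᵐ u ∂S, |⟪θ, u⟫_ℝ| ≤ 1 := by
    intro θ hθ
    refine haeS.mono fun u hu => ?_
    calc |⟪θ, u⟫_ℝ| ≤ ‖θ‖ * ‖u‖ := abs_real_inner_le_norm θ u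
    _ = 1 := by rw [hθ, hu, one_mul]
  have hint1 : ∀ (θ : Euc n), ‖θ‖ = 1 → Integrable (fun u : Euc n => |⟪θ, u⟫_ℝ|) S := by
    intro θ hθ
    refine (integrable_const (1:ℝ)).mono' (hasm1 θ) ?_
    refine (hbound θ hθ).mono fun u hu => ?_
    rwa [Real.norm_eq_abs, abs_abs]
  have hint2 : ∀ (θ : Euc n), ‖θ‖ = 1 → Integrable (fun u : Euc n => ⟪θ, u⟫_ℝ ^ 2) S := by
    intro θ hθ
    refine (integrable_const (1:ℝ)).mono' (hasm2 θ) ?_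
    refine (hbound θ hθ).mono fun u hu => ?_
    rw [Real.norm_eq_abs, abs_of_nonneg (sq_nonneg _), ← sq_abs]
    nlinarith [abs_nonneg ⟪θ, u⟫_ℝ]
  -- second moment value
  have hB : ∀ (θ : Euc n), ‖θ‖ = 1 → ∫ u, ⟪θ, u⟫_ℝ ^ 2 ∂S = I / n := by
    intro θ hθ
    rw [integral_eq_lintegral_of_nonneg_ae (ae_of_all _ fun u => sq_nonneg _) (hasm2 θ),
      hiso θ hθ, hSuniv, ENNReal.toReal_div, ENNReal.toReal_ofReal hI0]
    simp
  -- lower bound for unit vectors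
  have hlow : ∀ (θ : Euc n), ‖θ‖ = 1 →
      I / n ≤ ∫ y in frontier K, |⟪θ, nK y⟫_ℝ| * φ y ∂(μH[(n : ℝ) - 1]) := by
    intro θ hθ
    rw [hconv θ, ← hB θ hθ]
    refine integral_mono_ae (hint2 θ hθ) (hint1 θ hθ) ?_
    refine (hbound θ hθ).mono fun u hu => ?_
    calc ⟪θ, u⟫_ℝ ^ 2 = |⟪θ, u⟫_ℝ| * |⟪θ, u⟫_ℝ| := by
          rw [abs_mul_abs_self, sq]
    _ ≤ |⟪θ, u⟫_ℝ| * 1 := mul_le_mul_of_nonneg_left hu (abs_nonneg _)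
    _ = |⟪θ, u⟫_ℝ| := mul_one _
  -- upper bound for unit vectors
  have hupp : ∀ (θ : Euc n), ‖θ‖ = 1 →
      (∫ y in frontier K, |⟪θ, nK y⟫_ℝ| * φ y ∂(μH[(n : ℝ) - 1])) ≤ I / Real.sqrt n := by
    intro θ hθ
    rw [hconv θ]
    have hstep : ∫ u, |⟪θ, u⟫_ℝ| ∂S ≤
        ∫ u, (Real.sqrt n * ⟪θ, u⟫_ℝ ^ 2 + 1 / Real.sqrt n) / 2 ∂S := by
      refine integral_mono_ae (hint1 θ hθ)
        ((((hint2 θ hθ).const_mul _).add (integrable_const _)).div_const 2)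
        (ae_of_all _ fun u => ?_)
      show |⟪θ, u⟫_ℝ| ≤ (Real.sqrt n * ⟪θ, u⟫_ℝ ^ 2 + 1 / Real.sqrt n) / 2
      rw [← sq_abs ⟪θ, u⟫_ℝ]
      set s := Real.sqrt n with hs
      set a := |⟪θ, u⟫_ℝ| with ha
      have h2 : 2 * (s * a) ≤ s ^ 2 * a ^ 2 + 1 := by
        nlinarith [sq_nonneg (s * a - 1)]
      calc a = 2 * (s * a) / (2 * s) := by field_simp
      _ ≤ (s ^ 2 * a ^ 2 + 1) / (2 * s) := by gcongr
      _ = (s * a ^ 2 + 1 / s) / 2 := by field_simp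
    refine hstep.trans (le_of_eq ?_)
    rw [integral_div, integral_add ((hint2 θ hθ).const_mul _) (integrable_const _),
      integral_const_mul _ _, hB θ hθ, integral_const, smul_eq_mul, measureReal_def, hSunivReal]
    have hss : Real.sqrt n * Real.sqrt n = n := Real.mul_self_sqrt hnpos.le
    rw [← hss]
    field_simp
    rw [Real.sqrt_sq hsq.le]
    ring
  -- positive homogeneity
  have hhom : ∀ (c : ℝ), 0 ≤ c → ∀ θ : Euc n,
      (∫ y in frontier K, |⟪c • θ, nK y⟫_ℝ| * φ y ∂(μH[(n : ℝ) - 1]))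
        = c * ∫ y in frontier K, |⟪θ, nK y⟫_ℝ| * φ y ∂(μH[(n : ℝ) - 1]) := by
    intro c hc θ
    simp_rw [real_inner_smul_left, abs_mul, abs_of_nonneg hc, mul_assoc]
    rw [integral_const_mul _ _]
  -- support-function bounds for all θ
  have hlow' : ∀ θ : Euc n, (I / (2 * n)) * ‖θ‖ ≤
      (1 / 2) * ∫ y in frontier K, |⟪θ, nK y⟫_ℝ| * φ y ∂(μH[(n : ℝ) - 1]) := by
    intro θ
    rcases eq_or_ne θ 0 with rfl | hθ0
    · simp
    · have hno : (0:ℝ) < ‖θ‖ := norm_pos_iff.mpr hθ0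
      set θ' : Euc n := ‖θ‖⁻¹ • θ with hθ'def
      have hθ'1 : ‖θ'‖ = 1 := by
        rw [hθ'def, norm_smul, norm_inv, norm_norm, inv_mul_cancel₀ hno.ne']
      have hθeq : θ = ‖θ‖ • θ' := by
        rw [hθ'def, smul_smul, mul_inv_cancel₀ hno.ne', one_smul]
      calc (I / (2 * n)) * ‖θ‖ = (1/2) * (‖θ‖ * (I / n)) := by ring
      _ ≤ (1/2) * (‖θ‖ * ∫ y in frontier K, |⟪θ', nK y⟫_ℝ| * φ y ∂(μH[(n : ℝ) - 1])) := by
            have := hlow θ' hθ'1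
            nlinarith
      _ = (1/2) * ∫ y in frontier K, |⟪θ, nK y⟫_ℝ| * φ y ∂(μH[(n : ℝ) - 1]) := by
            rw [hθeq, hhom ‖θ‖ (norm_nonneg θ) θ', norm_smul, Real.norm_eq_abs,
              abs_of_nonneg (norm_nonneg θ), hθ'1, mul_one]
  have hupp' : ∀ θ : Euc n,
      (1 / 2) * (∫ y in frontier K, |⟪θ, nK y⟫_ℝ| * φ y ∂(μH[(n : ℝ) - 1])) ≤
        (I / (2 * Real.sqrt n)) * ‖θ‖ := by
    intro θ
    rcases eq_or_ne θ 0 with rfl | hθ0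
    · simp
    · have hno : (0:ℝ) < ‖θ‖ := norm_pos_iff.mpr hθ0
      set θ' : Euc n := ‖θ‖⁻¹ • θ with hθ'def
      have hθ'1 : ‖θ'‖ = 1 := by
        rw [hθ'def, norm_smul, norm_inv, norm_norm, inv_mul_cancel₀ hno.ne']
      have hθeq : θ = ‖θ‖ • θ' := by
        rw [hθ'def, smul_smul, mul_inv_cancel₀ hno.ne', one_smul]
      calc (1 / 2) * (∫ y in frontier K, |⟪θ, nK y⟫_ℝ| * φ y ∂(μH[(n : ℝ) - 1]))
          = (1/2) * (‖θ‖ * ∫ y in frontier K, |⟪θ', nK y⟫_ℝ| * φ y ∂(μH[(n : ℝ) - 1])) := by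
            rw [hθeq, hhom ‖θ‖ (norm_nonneg θ) θ', norm_smul, Real.norm_eq_abs,
              abs_of_nonneg (norm_nonneg θ), hθ'1, mul_one]
      _ ≤ (1/2) * (‖θ‖ * (I / Real.sqrt n)) := by
            have := hupp θ' hθ'1
            nlinarith
      _ = (I / (2 * Real.sqrt n)) * ‖θ‖ := by ring
  constructor
  · -- lower inclusion
    rintro x hx
    obtain ⟨z, hz, rfl⟩ := hx
    intro θ
    have hz1 : ‖z‖ ≤ 1 := by simpa using hz
    have hr0 : 0 ≤ I / (2 * n) := by positivity
    have h1 : ⟪(I / (2 * (n:ℝ))) • z, θ⟫_ℝ = (I / (2 * n)) * ⟪z, θ⟫_ℝ :=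
      real_inner_smul_left z θ _
    rw [h1]
    refine le_trans ?_ (hlow' θ)
    have h2 : ⟪z, θ⟫_ℝ ≤ ‖θ‖ := by
      calc ⟪z, θ⟫_ℝ ≤ ‖z‖ * ‖θ‖ := real_inner_le_norm z θ
      _ ≤ 1 * ‖θ‖ := by nlinarith [norm_nonneg θ]
      _ = ‖θ‖ := one_mul _
    nlinarith
  · -- upper inclusion
    rintro x hx
    have hR0 : 0 ≤ I / (2 * Real.sqrt n) := by positivity
    set R := I / (2 * Real.sqrt n) with hRdef
    have hxR : ‖x‖ ≤ R := by
      have h1 : ⟪x, x⟫_ℝ ≤ (1 / 2) * ∫ y in frontier K, |⟪x, nK y⟫_ℝ| * φ y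
          ∂(μH[(n : ℝ) - 1]) := hx x
      have h2 : ‖x‖ ^ 2 ≤ R * ‖x‖ := by
        rw [← real_inner_self_eq_norm_sq]
        exact h1.trans (hupp' x)
      rcases eq_or_lt_of_le (norm_nonneg x) with hx0 | hx0
      · rw [← hx0]; exact hR0
      · nlinarith
    rcases eq_or_lt_of_le hR0 with hR | hR
    · have hx0 : x = 0 := by
        rw [← norm_eq_zero]
        exact le_antisymm (hxR.trans hR.symm.le) (norm_nonneg x)
      exact ⟨0, Metric.mem_closedBall_self zero_le_one,
        by show R • (0 : Euc n) = x; rw [smul_zero, hx0]⟩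
    · refine ⟨R⁻¹ • x, ?_, ?_⟩
      · rw [Metric.mem_closedBall, dist_zero_right, norm_smul, norm_inv,
          Real.norm_eq_abs, abs_of_pos hR]
        rw [inv_mul_le_iff₀ hR, mul_one]
        exact hxR
      · show R • (R⁻¹ • x) = x
        rw [smul_smul, mul_inv_cancel₀ hR.ne', one_smul]
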